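/- Let u₁, u₂ be continuous real functions on the closure (in the Euclidean closed disk) of a domain Ω in the disk model of H², both satisfying the minimal vertical graph equation in Ω, with u₁ ≤ u₂ on the full boundary ∂Ω ∪ ∂∞Ω. Then u₁ ≤ u₂ on Ω. -/

import Mathlib

set_option maxHeartbeats 1000000


noncomputable def px (u : ℝ × ℝ → ℝ) (p : ℝ × ℝ) : ℝ := deriv (fun x => u (x, p.2)) p.1
noncomputable def py (u : ℝ × ℝ → ℝ) (p : ℝ × ℝ) : ℝ := deriv (fun y => u (p.1, y)) p.2
noncomputable def pxx (u : ℝ × ℝ → ℝ) (p : ℝ × ℝ) : ℝ := deriv (fun x => px u (x, p.2)) p.1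
noncomputable def pyy (u : ℝ × ℝ → ℝ) (p : ℝ × ℝ) : ℝ := deriv (fun y => py u (p.1, y)) p.2
noncomputable def pxy (u : ℝ × ℝ → ℝ) (p : ℝ × ℝ) : ℝ := deriv (fun y => px u (p.1, y)) p.2

/-- The conformal factor `F = (1 − x² − y²)/2` of the disk model. -/
noncomputable def F (p : ℝ × ℝ) : ℝ := (1 - p.1 ^ 2 - p.2 ^ 2) / 2

/-- The minimal vertical graph equation in the Poincaré disk model of `ℍ²`:
`(1 + F²u_x²)u_yy + (1 + F²u_y²)u_xx − 2F²u_x u_y u_xy + 2F(x u_x + y u_y)(u_x² + u_y²) = 0`. -/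
def MinimalEqDisk (u : ℝ × ℝ → ℝ) (p : ℝ × ℝ) : Prop :=
  (1 + (F p) ^ 2 * (px u p) ^ 2) * pyy u p + (1 + (F p) ^ 2 * (py u p) ^ 2) * pxx u p
    - 2 * (F p) ^ 2 * px u p * py u p * pxy u p
    + 2 * F p * (p.1 * px u p + p.2 * py u p) * ((px u p) ^ 2 + (py u p) ^ 2) = 0

open Set Filter

section slices
variable {E : Type*} [NormedAddCommGroup E] [NormedSpace ℝ E]

lemma hasDerivAt_slice_x {u : ℝ × ℝ → E} {p : ℝ × ℝ} (h : DifferentiableAt ℝ u p) :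
    HasDerivAt (fun x => u (x, p.2)) (fderiv ℝ u p (1, 0)) p.1 := by
  have hℓ : HasDerivAt (fun x : ℝ => ((x, p.2) : ℝ × ℝ)) ((1 : ℝ), (0 : ℝ)) p.1 :=
    (hasDerivAt_id p.1).prodMk (hasDerivAt_const p.1 p.2)
  have := h.hasFDerivAt.comp_hasDerivAt p.1 (by simpa using hℓ)
  simpa [Function.comp_def] using this

lemma hasDerivAt_slice_y {u : ℝ × ℝ → E} {p : ℝ × ℝ} (h : DifferentiableAt ℝ u p) :
    HasDerivAt (fun y => u (p.1, y)) (fderiv ℝ u p (0, 1)) p.2 := by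
  have hℓ : HasDerivAt (fun y : ℝ => ((p.1, y) : ℝ × ℝ)) ((0 : ℝ), (1 : ℝ)) p.2 :=
    (hasDerivAt_const p.2 p.1).prodMk (hasDerivAt_id p.2)
  have := h.hasFDerivAt.comp_hasDerivAt p.2 (by simpa using hℓ)
  simpa [Function.comp_def] using this

end slices

lemma px_eq {u : ℝ × ℝ → ℝ} {p : ℝ × ℝ} (h : DifferentiableAt ℝ u p) :
    px u p = fderiv ℝ u p (1, 0) := (hasDerivAt_slice_x h).deriv

lemma py_eq {u : ℝ × ℝ → ℝ} {p : ℝ × ℝ} (h : DifferentiableAt ℝ u p) :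
    py u p = fderiv ℝ u p (0, 1) := (hasDerivAt_slice_y h).deriv

variable {Ω : Set (ℝ × ℝ)} {u v u₁ u₂ φ : ℝ × ℝ → ℝ} {p : ℝ × ℝ} {ε : ℝ}

lemma diffAt_of_C2 (hΩ : IsOpen Ω) (hu : ContDiffOn ℝ 2 u Ω) (hp : p ∈ Ω) :
    DifferentiableAt ℝ u p :=
  (hu.contDiffAt (hΩ.mem_nhds hp)).differentiableAt (by norm_num)

lemma fderiv_diffAt_of_C2 (hΩ : IsOpen Ω) (hu : ContDiffOn ℝ 2 u Ω) (hp : p ∈ Ω) :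
    DifferentiableAt ℝ (fderiv ℝ u) p :=
  (((hu.fderiv_of_isOpen hΩ (m := 1) (by norm_num)).contDiffAt (hΩ.mem_nhds hp)).differentiableAt one_ne_zero)

lemma pxx_eq (hΩ : IsOpen Ω) (hu : ContDiffOn ℝ 2 u Ω) (hp : p ∈ Ω) :
    pxx u p = fderiv ℝ (fderiv ℝ u) p (1, 0) (1, 0) := by
  have hdiff : ∀ q ∈ Ω, DifferentiableAt ℝ u q := fun q hq => diffAt_of_C2 hΩ hu hq
  have hopen : IsOpen {x : ℝ | (x, p.2) ∈ Ω} :=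
    hΩ.preimage (by continuity)
  have hev : (fun x => px u (x, p.2)) =ᶠ[nhds p.1] fun x => fderiv ℝ u (x, p.2) (1, 0) := by
    filter_upwards [hopen.mem_nhds (by simpa using hp)] with x hx
    exact px_eq (hdiff _ hx)
  have h1 : HasDerivAt (fun x => fderiv ℝ u (x, p.2))
      (fderiv ℝ (fderiv ℝ u) p (1, 0)) p.1 := by
    have := hasDerivAt_slice_x (fderiv_diffAt_of_C2 hΩ hu hp)
    simpa using this
  have h2 : HasDerivAt (fun x => fderiv ℝ u (x, p.2) (1, 0))
      (fderiv ℝ (fderiv ℝ u) p (1, 0) (1, 0)) p.1 := by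
    have := (ContinuousLinearMap.apply ℝ ℝ ((1, 0) : ℝ × ℝ)).hasFDerivAt.comp_hasDerivAt p.1 h1
    simpa [Function.comp_def] using this
  rw [pxx, hev.deriv_eq, h2.deriv]

lemma pyy_eq (hΩ : IsOpen Ω) (hu : ContDiffOn ℝ 2 u Ω) (hp : p ∈ Ω) :
    pyy u p = fderiv ℝ (fderiv ℝ u) p (0, 1) (0, 1) := by
  have hdiff : ∀ q ∈ Ω, DifferentiableAt ℝ u q := fun q hq => diffAt_of_C2 hΩ hu hq
  have hopen : IsOpen {y : ℝ | (p.1, y) ∈ Ω} := hΩ.preimage (by continuity)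
  have hev : (fun y => py u (p.1, y)) =ᶠ[nhds p.2] fun y => fderiv ℝ u (p.1, y) (0, 1) := by
    filter_upwards [hopen.mem_nhds (by simpa using hp)] with y hy
    exact py_eq (hdiff _ hy)
  have h1 : HasDerivAt (fun y => fderiv ℝ u (p.1, y))
      (fderiv ℝ (fderiv ℝ u) p (0, 1)) p.2 := by
    have := hasDerivAt_slice_y (fderiv_diffAt_of_C2 hΩ hu hp)
    simpa using this
  have h2 : HasDerivAt (fun y => fderiv ℝ u (p.1, y) (0, 1))
      (fderiv ℝ (fderiv ℝ u) p (0, 1) (0, 1)) p.2 := by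
    have := (ContinuousLinearMap.apply ℝ ℝ ((0, 1) : ℝ × ℝ)).hasFDerivAt.comp_hasDerivAt p.2 h1
    simpa [Function.comp_def] using this
  rw [pyy, hev.deriv_eq, h2.deriv]

lemma pxy_eq (hΩ : IsOpen Ω) (hu : ContDiffOn ℝ 2 u Ω) (hp : p ∈ Ω) :
    pxy u p = fderiv ℝ (fderiv ℝ u) p (0, 1) (1, 0) := by
  have hdiff : ∀ q ∈ Ω, DifferentiableAt ℝ u q := fun q hq => diffAt_of_C2 hΩ hu hq
  have hopen : IsOpen {y : ℝ | (p.1, y) ∈ Ω} := hΩ.preimage (by continuity)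
  have hev : (fun y => px u (p.1, y)) =ᶠ[nhds p.2] fun y => fderiv ℝ u (p.1, y) (1, 0) := by
    filter_upwards [hopen.mem_nhds (by simpa using hp)] with y hy
    exact px_eq (hdiff _ hy)
  have h1 : HasDerivAt (fun y => fderiv ℝ u (p.1, y))
      (fderiv ℝ (fderiv ℝ u) p (0, 1)) p.2 := by
    have := hasDerivAt_slice_y (fderiv_diffAt_of_C2 hΩ hu hp)
    simpa using this
  have h2 : HasDerivAt (fun y => fderiv ℝ u (p.1, y) (1, 0))
      (fderiv ℝ (fderiv ℝ u) p (0, 1) (1, 0)) p.2 := by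
    have := (ContinuousLinearMap.apply ℝ ℝ ((1, 0) : ℝ × ℝ)).hasFDerivAt.comp_hasDerivAt p.2 h1
    simpa [Function.comp_def] using this
  rw [pxy, hev.deriv_eq, h2.deriv]

lemma fderiv2_symm (hΩ : IsOpen Ω) (hv : ContDiffOn ℝ 2 v Ω) (hp : p ∈ Ω) (a b : ℝ × ℝ) :
    fderiv ℝ (fderiv ℝ v) p a b = fderiv ℝ (fderiv ℝ v) p b a := by
  have hdiff : ∀ q ∈ Ω, DifferentiableAt ℝ v q := fun q hq => diffAt_of_C2 hΩ hv hq
  have hev : ∀ᶠ q in nhds p, HasFDerivAt v (fderiv ℝ v q) q := by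
    filter_upwards [hΩ.mem_nhds hp] with q hq
    exact (hdiff q hq).hasFDerivAt
  have hgd : DifferentiableAt ℝ (fderiv ℝ v) p := fderiv_diffAt_of_C2 hΩ hv hp
  exact second_derivative_symmetric_of_eventually hev hgd.hasFDerivAt a b

lemma maxOn_directional (hΩ : IsOpen Ω) (hv : ContDiffOn ℝ 2 v Ω) (hp : p ∈ Ω)
    (hmax : IsMaxOn v Ω p) (d : ℝ × ℝ) :
    fderiv ℝ v p d = 0 ∧ fderiv ℝ (fderiv ℝ v) p d d ≤ 0 := by
  have hdiff : ∀ q ∈ Ω, DifferentiableAt ℝ v q := fun q hq => diffAt_of_C2 hΩ hv hq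
  have hgd : DifferentiableAt ℝ (fderiv ℝ v) p := fderiv_diffAt_of_C2 hΩ hv hp
  set ℓ : ℝ → ℝ × ℝ := fun t => p + t • d with hℓ
  have hℓ0 : ℓ 0 = p := by simp [hℓ]
  have hℓd : ∀ t, HasDerivAt ℓ d t := by
    intro t
    simpa [hℓ] using ((hasDerivAt_id t).smul_const d).const_add p
  have hcont : Continuous ℓ := by fun_prop
  obtain ⟨r, hr, hball⟩ := Metric.isOpen_iff.1 (hΩ.preimage hcont) 0 (by simp [hℓ0, hp])
  have hmem : ∀ t : ℝ, |t| < r → ℓ t ∈ Ω := by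
    intro t ht
    exact hball (by simpa [Real.norm_eq_abs] using ht)
  set g : ℝ → ℝ := fun t => v (ℓ t) with hg
  set G1 : ℝ → ℝ := fun t => fderiv ℝ v (ℓ t) d with hG1
  have hgder : ∀ t : ℝ, |t| < r → HasDerivAt g (G1 t) t := by
    intro t ht
    exact (hdiff _ (hmem t ht)).hasFDerivAt.comp_hasDerivAt t (hℓd t)
  set c : ℝ := fderiv ℝ (fderiv ℝ v) p d d with hc
  have hG1der : HasDerivAt G1 c 0 := by
    have h1 : HasDerivAt (fun t => fderiv ℝ v (ℓ t)) (fderiv ℝ (fderiv ℝ v) p d) 0 := by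
      have hgd' : HasFDerivAt (fderiv ℝ v) (fderiv ℝ (fderiv ℝ v) p) (ℓ 0) := by
        rw [hℓ0]; exact hgd.hasFDerivAt
      exact hgd'.comp_hasDerivAt 0 (hℓd 0)
    have := (ContinuousLinearMap.apply ℝ ℝ d).hasFDerivAt.comp_hasDerivAt 0 h1
    simpa [Function.comp_def] using this
  have hlocmax : IsLocalMax g 0 := by
    have : ∀ᶠ t in nhds (0 : ℝ), |t| < r := by
      have : Metric.ball (0 : ℝ) r ∈ nhds (0 : ℝ) := Metric.ball_mem_nhds 0 hr
      filter_upwards [this] with t ht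
      simpa [Real.norm_eq_abs] using ht
    filter_upwards [this] with t ht
    simpa [hg, hℓ0] using hmax (hmem t ht)
  have hG10 : G1 0 = 0 := hlocmax.hasDerivAt_eq_zero (by simpa [hℓ0] using hgder 0 (by simpa using hr))
  have hd0 : fderiv ℝ v p d = 0 := by simpa [hG1, hℓ0] using hG10
  refine ⟨hd0, ?_⟩
  by_contra hcpos
  push_neg at hcpos
  have hslope : Tendsto (slope G1 0) (nhdsWithin 0 {(0:ℝ)}ᶜ) (nhds c) :=
    hasDerivAt_iff_tendsto_slope.1 hG1der
  have hslope' : ∀ᶠ t in nhdsWithin (0:ℝ) (Ioi 0), c / 2 < slope G1 0 t := by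
    have h1 : ∀ᶠ t in nhdsWithin (0:ℝ) {(0:ℝ)}ᶜ, c / 2 < slope G1 0 t :=
      hslope.eventually (eventually_gt_nhds (by linarith))
    exact h1.filter_mono (nhdsWithin_mono 0 (fun t ht => ne_of_gt ht))
  have hsmall : ∀ᶠ t in nhdsWithin (0:ℝ) (Ioi 0), |t| < r ∧ g t ≤ g 0 := by
    have h2 : ∀ᶠ t in nhds (0:ℝ), |t| < r ∧ g t ≤ g 0 := by
      have : ∀ᶠ t in nhds (0 : ℝ), |t| < r := by
        filter_upwards [Metric.ball_mem_nhds (0:ℝ) hr] with t ht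
        simpa [Real.norm_eq_abs] using ht
      exact this.and hlocmax
    exact h2.filter_mono nhdsWithin_le_nhds
  obtain ⟨ε', hε0, hε⟩ := (nhdsGT_basis (0:ℝ)).eventually_iff.1 (hslope'.and hsmall)
  set ε'' : ℝ := min (ε' / 2) (r / 2) with hε''
  have hε''pos : 0 < ε'' := lt_min (by linarith) (by linarith)
  have hε''mem : ε'' ∈ Ioo (0:ℝ) ε' := ⟨hε''pos, lt_of_le_of_lt (min_le_left _ _) (by linarith)⟩
  have hG1pos : ∀ t ∈ Ioo (0:ℝ) ε'', 0 < G1 t := by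
    intro t ht
    have htε : t ∈ Ioo (0:ℝ) ε' := ⟨ht.1, lt_trans ht.2 hε''mem.2⟩
    have := (hε htε).1
    have hslope_eq : slope G1 0 t = G1 t / t := by simp [slope, hG10, div_eq_inv_mul]
    rw [hslope_eq] at this
    have : 0 < G1 t / t := lt_trans (by linarith) this
    exact (div_pos_iff.1 this).resolve_right (fun h => absurd ht.1 (not_lt.2 h.2.le)) |>.1
  have hmono : StrictMonoOn g (Icc (0:ℝ) ε'') := by
    apply strictMonoOn_of_deriv_pos (convex_Icc _ _)
    · intro t ht
      have htr : |t| < r := by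
        rw [abs_lt]; constructor
        · linarith [ht.1]
        · exact lt_of_le_of_lt ht.2 (lt_of_le_of_lt (min_le_right _ _) (by linarith))
      exact ((hgder t htr).differentiableAt).continuousAt.continuousWithinAt
    · intro t ht
      rw [interior_Icc] at ht
      have htr : |t| < r := by
        rw [abs_lt]; constructor
        · linarith [ht.1]
        · exact lt_of_lt_of_le ht.2 (le_trans (min_le_right _ _) (by linarith))
      rw [(hgder t htr).deriv]
      exact hG1pos t ht
  have hcontra : g 0 < g ε'' := hmono (left_mem_Icc.2 hε''pos.le) (right_mem_Icc.2 hε''pos.le) hε''pos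
  have : g ε'' ≤ g 0 := (hε hε''mem).2.2
  linarith

noncomputable def φf (κ : ℝ) : ℝ × ℝ → ℝ := fun q => Real.exp (κ * q.1)

lemma φf_contDiff (κ : ℝ) : ContDiff ℝ 2 (φf κ) :=
  Real.contDiff_exp.comp (contDiff_const.mul contDiff_fst)

lemma φf_px (κ : ℝ) (p : ℝ × ℝ) : px (φf κ) p = κ * Real.exp (κ * p.1) := by
  have : ∀ x : ℝ, HasDerivAt (fun t : ℝ => Real.exp (κ * t)) (κ * Real.exp (κ * x)) x := by
    intro x
    have := ((hasDerivAt_id x).const_mul κ).exp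
    simpa [mul_comm] using this
  exact (this p.1).deriv

lemma φf_py (κ : ℝ) (p : ℝ × ℝ) : py (φf κ) p = 0 := by
  simp [py, φf]

lemma φf_pxx (κ : ℝ) (p : ℝ × ℝ) : pxx (φf κ) p = κ * (κ * Real.exp (κ * p.1)) := by
  have h : (fun x : ℝ => px (φf κ) (x, p.2)) = fun x : ℝ => κ * Real.exp (κ * x) := by
    funext x; exact φf_px κ (x, p.2)
  rw [pxx, h]
  have : ∀ x : ℝ, HasDerivAt (fun t : ℝ => κ * Real.exp (κ * t)) (κ * (κ * Real.exp (κ * x))) x := by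
    intro x
    have := (((hasDerivAt_id x).const_mul κ).exp).const_mul κ
    simpa [mul_comm, mul_assoc, mul_left_comm] using this
  exact (this p.1).deriv

lemma φf_pyy (κ : ℝ) (p : ℝ × ℝ) : pyy (φf κ) p = 0 := by
  have h : (fun y : ℝ => py (φf κ) (p.1, y)) = fun _ : ℝ => (0 : ℝ) := by
    funext y; exact φf_py κ (p.1, y)
  rw [pyy, h]; simp

lemma φf_pxy (κ : ℝ) (p : ℝ × ℝ) : pxy (φf κ) p = 0 := by
  have h : (fun y : ℝ => px (φf κ) (p.1, y)) = fun _ : ℝ => κ * Real.exp (κ * p.1) := by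
    funext y; exact φf_px κ (p.1, y)
  rw [pxy, h]; simp

lemma fderiv_combo (h1 : DifferentiableAt ℝ u₁ p) (h2 : DifferentiableAt ℝ u₂ p)
    (hφ : DifferentiableAt ℝ φ p) :
    fderiv ℝ (fun q => u₁ q - u₂ q + ε * φ q) p
      = fderiv ℝ u₁ p - fderiv ℝ u₂ p + ε • fderiv ℝ φ p := by
  rw [fderiv_fun_add (f := fun q => u₁ q - u₂ q) (h1.sub h2) (hφ.const_mul ε), fderiv_fun_sub h1 h2, fderiv_const_mul hφ ε]

lemma fderiv2_combo (hΩ : IsOpen Ω) (hs₁ : ContDiffOn ℝ 2 u₁ Ω) (hs₂ : ContDiffOn ℝ 2 u₂ Ω)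
    (hφ : ContDiff ℝ 2 φ) (hp : p ∈ Ω) :
    fderiv ℝ (fderiv ℝ (fun q => u₁ q - u₂ q + ε * φ q)) p
      = fderiv ℝ (fderiv ℝ u₁) p - fderiv ℝ (fderiv ℝ u₂) p + ε • fderiv ℝ (fderiv ℝ φ) p := by
  have hd1 : ∀ q ∈ Ω, DifferentiableAt ℝ u₁ q := fun q hq => diffAt_of_C2 hΩ hs₁ hq
  have hd2 : ∀ q ∈ Ω, DifferentiableAt ℝ u₂ q := fun q hq => diffAt_of_C2 hΩ hs₂ hq
  have hdφ : ∀ q : ℝ × ℝ, DifferentiableAt ℝ φ q := fun q =>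
    hφ.differentiable (by norm_num) q
  have hev : fderiv ℝ (fun q => u₁ q - u₂ q + ε * φ q)
      =ᶠ[nhds p] fun q => fderiv ℝ u₁ q - fderiv ℝ u₂ q + ε • fderiv ℝ φ q := by
    filter_upwards [hΩ.mem_nhds hp] with q hq
    exact fderiv_combo (hd1 q hq) (hd2 q hq) (hdφ q)
  have hD1 : DifferentiableAt ℝ (fderiv ℝ u₁) p := fderiv_diffAt_of_C2 hΩ hs₁ hp
  have hD2 : DifferentiableAt ℝ (fderiv ℝ u₂) p := fderiv_diffAt_of_C2 hΩ hs₂ hp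
  have hDφ : DifferentiableAt ℝ (fderiv ℝ φ) p :=
    ((hφ.fderiv_right (m := 1) (by norm_num)).differentiable one_ne_zero) p
  rw [hev.fderiv_eq, fderiv_fun_add (f := fun q => fderiv ℝ u₁ q - fderiv ℝ u₂ q)
      (g := fun q => ε • fderiv ℝ φ q) (hD1.sub hD2) (hDφ.const_smul ε), fderiv_fun_sub hD1 hD2,
    fderiv_fun_const_smul hDφ ε]

lemma bilin_expand (B : ℝ × ℝ →L[ℝ] ℝ × ℝ →L[ℝ] ℝ) (s t : ℝ)
    (hsymm : B (1, 0) (0, 1) = B (0, 1) (1, 0)) :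
    B (s, t) (s, t) = s ^ 2 * B (1, 0) (1, 0) + 2 * s * t * B (0, 1) (1, 0)
      + t ^ 2 * B (0, 1) (0, 1) := by
  have h : ((s, t) : ℝ × ℝ) = s • ((1, 0) : ℝ × ℝ) + t • ((0, 1) : ℝ × ℝ) := by
    simp [Prod.ext_iff]
  rw [h]
  simp only [map_add, map_smul, ContinuousLinearMap.add_apply, ContinuousLinearMap.smul_apply,
    smul_eq_mul]
  linear_combination s * t * hsymm

lemma prod_bound {u v m n : ℝ} (hu : |u| ≤ m) (hv : |v| ≤ n) : |u * v| ≤ m * n := by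
  rw [abs_mul]
  exact mul_le_mul hu hv (abs_nonneg v) ((abs_nonneg u).trans hu)

lemma endgame (G C κ ε δ e FF x y a₁ b₁ a₂ b₂ X₁ Y₁ Z₁ X₂ Y₂ Z₂ : ℝ)
    (hG : 0 ≤ G) (hC : 0 ≤ C)
    (hκ : κ = 6 * (G + 1) ^ 2 + 2 * (G + 1) * C + 1)
    (hδ : δ = ε * κ * e) (hδpos : 0 < δ) (hδ1 : δ ≤ 1)
    (ha : a₁ = a₂ - δ) (hbb : b₁ = b₂)
    (hp1 : (1 + FF ^ 2 * a₁ ^ 2) * Y₁ + (1 + FF ^ 2 * b₁ ^ 2) * X₁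
        - 2 * FF ^ 2 * a₁ * b₁ * Z₁ + 2 * FF * (x * a₁ + y * b₁) * (a₁ ^ 2 + b₁ ^ 2) = 0)
    (hp2 : (1 + FF ^ 2 * a₂ ^ 2) * Y₂ + (1 + FF ^ 2 * b₂ ^ 2) * X₂
        - 2 * FF ^ 2 * a₂ * b₂ * Z₂ + 2 * FF * (x * a₂ + y * b₂) * (a₂ ^ 2 + b₂ ^ 2) = 0)
    (hQ1 : X₁ - X₂ + ε * (κ * (κ * e)) ≤ 0)
    (hQ2 : Y₁ - Y₂ ≤ 0)
    (hQ3 : b₁ ^ 2 * (X₁ - X₂ + ε * (κ * (κ * e))) + 2 * b₁ * (-a₁) * (Z₁ - Z₂)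
        + (-a₁) ^ 2 * (Y₁ - Y₂) ≤ 0)
    (hFF : |FF| ≤ 1 / 2) (hx : |x| ≤ 1) (hy : |y| ≤ 1)
    (ha2 : |a₂| ≤ G) (hb2 : |b₂| ≤ G)
    (hX2 : |X₂| ≤ C) (hY2 : |Y₂| ≤ C) (hZ2 : |Z₂| ≤ C) : False := by
  subst ha
  subst hbb
  have hκδ : ε * (κ * (κ * e)) = κ * δ := by rw [hδ]; ring
  rw [hκδ] at hQ1 hQ3
  obtain ⟨ha2l, ha2r⟩ := abs_le.1 ha2
  obtain ⟨hb2l, hb2r⟩ := abs_le.1 hb2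
  obtain ⟨hFl, hFr⟩ := abs_le.1 hFF
  have hQ3' : FF ^ 2 * (b₁ ^ 2 * (X₁ - X₂ + κ * δ) + 2 * b₁ * (-(a₂ - δ)) * (Z₁ - Z₂)
      + (-(a₂ - δ)) ^ 2 * (Y₁ - Y₂)) ≤ 0 := by
    have := mul_le_mul_of_nonneg_left hQ3 (sq_nonneg FF)
    simpa using this
  set T : ℝ := (x * a₂ + y * b₁) * (2 * a₂ - δ) + x * ((a₂ - δ) ^ 2 + b₁ ^ 2) with hT
  have hid : (X₁ - X₂ + κ * δ) + (Y₁ - Y₂)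
      + FF ^ 2 * (b₁ ^ 2 * (X₁ - X₂ + κ * δ) + 2 * b₁ * (-(a₂ - δ)) * (Z₁ - Z₂)
        + (-(a₂ - δ)) ^ 2 * (Y₁ - Y₂))
      = δ * (2 * FF * T) + δ * (FF ^ 2 * ((a₂ - δ) + a₂) * Y₂) - δ * (2 * FF ^ 2 * b₁ * Z₂)
        + (1 + FF ^ 2 * b₁ ^ 2) * (κ * δ) := by
    rw [hT]; linear_combination hp1 - hp2
  have hRHS : δ * (2 * FF * T) + δ * (FF ^ 2 * ((a₂ - δ) + a₂) * Y₂)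
      - δ * (2 * FF ^ 2 * b₁ * Z₂) + (1 + FF ^ 2 * b₁ ^ 2) * (κ * δ) ≤ 0 := by
    rw [← hid]; linarith only [hQ1, hQ2, hQ3']
  have h1 : |x * a₂ + y * b₁| ≤ 2 * G := by
    have i1 : |x * a₂| ≤ 1 * G := prod_bound hx ha2
    have i2 : |y * b₁| ≤ 1 * G := prod_bound hy hb2
    calc |x * a₂ + y * b₁| ≤ |x * a₂| + |y * b₁| := abs_add_le _ _
      _ ≤ 2 * G := by linarith only [i1, i2]
  have h2 : |2 * a₂ - δ| ≤ 2 * G + 1 := by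
    rw [abs_le]
    constructor <;> [skip; skip] <;> linarith only [ha2l, ha2r, hδpos, hδ1]
  have h3 : |(a₂ - δ) ^ 2 + b₁ ^ 2| ≤ (G + 1) ^ 2 + G ^ 2 := by
    rw [abs_of_nonneg (by positivity)]
    have i1 : (a₂ - δ) ^ 2 ≤ (G + 1) ^ 2 :=
      sq_le_sq' (by linarith only [ha2l, hδ1]) (by linarith only [ha2r, hδpos])
    have i2 : b₁ ^ 2 ≤ G ^ 2 := sq_le_sq' hb2l hb2r
    linarith only [i1, i2]
  have hTb : |T| ≤ 2 * G * (2 * G + 1) + 1 * ((G + 1) ^ 2 + G ^ 2) := by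
    rw [hT]
    calc |(x * a₂ + y * b₁) * (2 * a₂ - δ) + x * ((a₂ - δ) ^ 2 + b₁ ^ 2)|
        ≤ |(x * a₂ + y * b₁) * (2 * a₂ - δ)| + |x * ((a₂ - δ) ^ 2 + b₁ ^ 2)| := abs_add_le _ _
      _ ≤ 2 * G * (2 * G + 1) + 1 * ((G + 1) ^ 2 + G ^ 2) :=
        add_le_add (prod_bound h1 h2) (prod_bound hx h3)
  have hFT : |2 * FF * T| ≤ 6 * (G + 1) ^ 2 := by
    have i0 : |2 * FF| ≤ 1 := by
      rw [abs_le]; constructor <;> linarith only [hFl, hFr]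
    calc |2 * FF * T| ≤ 1 * (2 * G * (2 * G + 1) + 1 * ((G + 1) ^ 2 + G ^ 2)) :=
        prod_bound i0 hTb
      _ ≤ 6 * (G + 1) ^ 2 := by nlinarith only [hG]
  have hFsq2 : FF ^ 2 ≤ 1 / 4 := by
    have := sq_le_sq' hFl hFr
    linarith only [this]
  have hFsq : |FF ^ 2| ≤ 1 / 4 := by
    rw [abs_of_nonneg (sq_nonneg _)]; exact hFsq2
  have hterm2 : |FF ^ 2 * ((a₂ - δ) + a₂) * Y₂| ≤ (G + 1) * C := by
    have i2 : |(a₂ - δ) + a₂| ≤ 2 * G + 1 := by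
      rw [abs_le]; constructor <;> linarith only [ha2l, ha2r, hδpos, hδ1]
    calc |FF ^ 2 * ((a₂ - δ) + a₂) * Y₂| ≤ 1 / 4 * (2 * G + 1) * C :=
        prod_bound (prod_bound hFsq i2) hY2
      _ ≤ (G + 1) * C := by nlinarith only [hG, hC]
  have hterm3 : |2 * FF ^ 2 * b₁ * Z₂| ≤ (G + 1) * C := by
    have i1 : |2 * FF ^ 2| ≤ 1 / 2 := by
      rw [abs_of_nonneg (by positivity)]
      linarith only [hFsq2]
    calc |2 * FF ^ 2 * b₁ * Z₂| ≤ 1 / 2 * G * C := prod_bound (prod_bound i1 hb2) hZ2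
      _ ≤ (G + 1) * C := by nlinarith only [hG, hC]
  have l1 := (abs_le.1 hFT).1
  have l2 := (abs_le.1 hterm2).1
  have l3 := (abs_le.1 hterm3).2
  have hκpos : 0 < κ := by rw [hκ]; positivity
  have l4 : 0 ≤ FF ^ 2 * b₁ ^ 2 * (κ * δ) :=
    mul_nonneg (mul_nonneg (sq_nonneg FF) (sq_nonneg b₁)) (mul_pos hκpos hδpos).le
  have m1 := mul_le_mul_of_nonneg_left l1 hδpos.le
  have m2 := mul_le_mul_of_nonneg_left l2 hδpos.le
  have m3 := mul_le_mul_of_nonneg_left l3 hδpos.le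
  have hκδexp : (1 + FF ^ 2 * b₁ ^ 2) * (κ * δ)
      = δ * (6 * (G + 1) ^ 2) + δ * ((G + 1) * C) + δ * ((G + 1) * C) + δ
        + FF ^ 2 * b₁ ^ 2 * (κ * δ) := by
    rw [hκ]; ring
  linarith only [hRHS, m1, m2, m3, l4, hκδexp, hδpos]

/-- Classical maximum principle: if `u₁, u₂` are continuous on the closure of a
domain `Ω` in the disk model, satisfy the minimal vertical graph equation in
`Ω`, and `u₁ ≤ u₂` on the full (finite and asymptotic) boundary
`closure Ω \ Ω`, then `u₁ ≤ u₂` on `Ω`. -/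
theorem stmt_16 (Ω : Set (ℝ × ℝ)) (hΩ : IsOpen Ω)
    (hΩball : Ω ⊆ Metric.ball (0 : ℝ × ℝ) 1)
    (u₁ u₂ : ℝ × ℝ → ℝ)
    (hc₁ : ContinuousOn u₁ (closure Ω)) (hc₂ : ContinuousOn u₂ (closure Ω))
    (hs₁ : ContDiffOn ℝ 2 u₁ Ω) (hs₂ : ContDiffOn ℝ 2 u₂ Ω)
    (he₁ : ∀ p ∈ Ω, MinimalEqDisk u₁ p) (he₂ : ∀ p ∈ Ω, MinimalEqDisk u₂ p)
    (hb : ∀ p ∈ closure Ω \ Ω, u₁ p ≤ u₂ p) :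
    ∀ p ∈ Ω, u₁ p ≤ u₂ p := by
  by_contra hcon
  push_neg at hcon
  obtain ⟨p₀, hp₀Ω, hp₀⟩ := hcon
  have hwc : ContinuousOn (fun q => u₁ q - u₂ q) (closure Ω) := hc₁.sub hc₂
  have hbdd : Bornology.IsBounded Ω := Metric.isBounded_ball.subset hΩball
  have hcomp : IsCompact (closure Ω) := hbdd.isCompact_closure
  have hne : (closure Ω).Nonempty := ⟨p₀, subset_closure hp₀Ω⟩
  obtain ⟨pM, hpM, hpMmax⟩ := hcomp.exists_isMaxOn hne hwc
  set M : ℝ := u₁ pM - u₂ pM with hM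
  clear_value M
  have hMpos : 0 < M := by
    have h := hpMmax (subset_closure hp₀Ω)
    simp only [Set.mem_setOf_eq] at h
    rw [hM]; linarith
  -- the compact set S
  set S : Set (ℝ × ℝ) := closure Ω ∩ (fun q => u₁ q - u₂ q) ⁻¹' Ici (M / 2) with hS
  have hSsub : S ⊆ Ω := by
    rintro q ⟨hq1, hq2⟩
    by_contra hqΩ
    have hbq := hb q ⟨hq1, hqΩ⟩
    have : M / 2 ≤ u₁ q - u₂ q := hq2
    linarith
  have hSclosed : IsClosed S := hwc.preimage_isClosed_of_isClosed isClosed_closure isClosed_Ici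
  have hScomp : IsCompact S := hcomp.of_isClosed_subset hSclosed inter_subset_left
  -- bounds on S
  have hcont1 : ContinuousOn (fderiv ℝ u₂) S :=
    (hs₂.continuousOn_fderiv_of_isOpen hΩ (by norm_num)).mono hSsub
  obtain ⟨G₀, hG₀⟩ := hScomp.exists_bound_of_continuousOn hcont1
  have hcont2 : ContinuousOn (fderiv ℝ (fderiv ℝ u₂)) S :=
    ((hs₂.fderiv_of_isOpen hΩ (m := 1) (by norm_num)).continuousOn_fderiv_of_isOpen hΩ (by norm_num)).mono hSsub
  obtain ⟨C₀, hC₀⟩ := hScomp.exists_bound_of_continuousOn (f := fderiv ℝ (fderiv ℝ u₂)) hcont2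
  set G : ℝ := max G₀ 0 with hG
  set C : ℝ := max C₀ 0 with hC
  clear_value G C
  have hGnn : 0 ≤ G := by rw [hG]; exact le_max_right _ _
  have hCnn : 0 ≤ C := by rw [hC]; exact le_max_right _ _
  -- choose κ and ε
  set κ : ℝ := 6 * (G + 1) ^ 2 + 2 * (G + 1) * C + 1 with hκdef
  clear_value κ
  have hκpos : 0 < κ := by rw [hκdef]; positivity
  have hEκ : 0 < Real.exp κ := Real.exp_pos κ
  set ε : ℝ := min (M / (2 * Real.exp κ)) (1 / (κ * Real.exp κ)) with hε
  clear_value ε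
  have hεpos : 0 < ε := by
    rw [hε]
    exact lt_min (div_pos hMpos (by positivity)) (div_pos one_pos (mul_pos hκpos hEκ))
  -- the perturbed difference
  set v : ℝ × ℝ → ℝ := fun q => u₁ q - u₂ q + ε * φf κ q with hv
  have hφcont : Continuous (φf κ) := (φf_contDiff κ).continuous
  have hvcont : ContinuousOn v (closure Ω) :=
    (hc₁.sub hc₂).add (continuous_const.mul hφcont).continuousOn
  obtain ⟨P, hPmem, hPmax⟩ := hcomp.exists_isMaxOn hne hvcont
  -- coordinate bounds on the closure
  have hcball : closure Ω ⊆ Metric.closedBall (0 : ℝ × ℝ) 1 := fun q hq =>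
    Metric.closure_ball_subset_closedBall (closure_mono hΩball hq)
  have hcoord : ∀ q ∈ closure Ω, |q.1| ≤ 1 ∧ |q.2| ≤ 1 := by
    intro q hq
    have h := mem_closedBall_zero_iff.1 (hcball hq)
    constructor
    · exact le_trans (by simpa [Real.norm_eq_abs] using norm_fst_le q) h
    · exact le_trans (by simpa [Real.norm_eq_abs] using norm_snd_le q) h
  have hexp_le : ∀ q ∈ closure Ω, Real.exp (κ * q.1) ≤ Real.exp κ := by
    intro q hq
    apply Real.exp_le_exp.2
    have h1 : q.1 ≤ 1 := (abs_le.1 (hcoord q hq).1).2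
    nlinarith only [hκpos, h1]
  -- the max point is in S
  have hεexp : ε * Real.exp κ ≤ M / 2 := by
    have h1 : ε ≤ M / (2 * Real.exp κ) := by rw [hε]; exact min_le_left _ _
    have h2 := mul_le_mul_of_nonneg_right h1 hEκ.le
    have h3 : M / (2 * Real.exp κ) * Real.exp κ = M / 2 := by
      field_simp
    linarith only [h2, h3]
  have hvPge : M ≤ v P := by
    have h1 : v pM ≤ v P := hPmax hpM
    have h2 : M ≤ v pM := by
      have hpos : (0:ℝ) < φf κ pM := Real.exp_pos _
      have heq : v pM = (u₁ pM - u₂ pM) + ε * φf κ pM := by simp only [hv]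
      rw [heq, ← hM]
      nlinarith [mul_pos hεpos hpos]
    linarith
  have hPS : P ∈ S := by
    refine ⟨hPmem, ?_⟩
    have h1 : ε * φf κ P ≤ ε * Real.exp κ :=
      mul_le_mul_of_nonneg_left (hexp_le P hPmem) hεpos.le
    have h2 : u₁ P - u₂ P = v P - ε * φf κ P := by simp only [hv]; ring
    have : M / 2 ≤ u₁ P - u₂ P := by
      rw [h2]
      have := Real.exp_pos (κ * P.1)
      linarith
    exact this
  have hPΩ : P ∈ Ω := hSsub hPS
  have hmaxΩ : IsMaxOn v Ω P := hPmax.on_subset subset_closure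
  have hvC2 : ContDiffOn ℝ 2 v Ω :=
    (hs₁.sub hs₂).add (contDiff_const.mul (φf_contDiff κ)).contDiffOn
  -- abbreviations
  have hd1 : DifferentiableAt ℝ u₁ P := diffAt_of_C2 hΩ hs₁ hPΩ
  have hd2 : DifferentiableAt ℝ u₂ P := diffAt_of_C2 hΩ hs₂ hPΩ
  have hdφ : DifferentiableAt ℝ (φf κ) P := (φf_contDiff κ).differentiable (by norm_num) P
  have hφC2univ : ContDiffOn ℝ 2 (φf κ) univ := (φf_contDiff κ).contDiffOn
  -- φ derivative values
  have hφ10 : fderiv ℝ (φf κ) P (1, 0) = κ * Real.exp (κ * P.1) := by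
    rw [← px_eq hdφ]; exact φf_px κ P
  have hφ01 : fderiv ℝ (φf κ) P (0, 1) = 0 := by
    rw [← py_eq hdφ]; exact φf_py κ P
  have hφxx : fderiv ℝ (fderiv ℝ (φf κ)) P (1, 0) (1, 0) = κ * (κ * Real.exp (κ * P.1)) := by
    rw [← pxx_eq isOpen_univ hφC2univ (mem_univ P)]; exact φf_pxx κ P
  have hφyy : fderiv ℝ (fderiv ℝ (φf κ)) P (0, 1) (0, 1) = 0 := by
    rw [← pyy_eq isOpen_univ hφC2univ (mem_univ P)]; exact φf_pyy κ P
  have hφyx : fderiv ℝ (fderiv ℝ (φf κ)) P (0, 1) (1, 0) = 0 := by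
    rw [← pxy_eq isOpen_univ hφC2univ (mem_univ P)]; exact φf_pxy κ P
  -- first order conditions
  have hv1 : fderiv ℝ v P = fderiv ℝ u₁ P - fderiv ℝ u₂ P + ε • fderiv ℝ (φf κ) P := by
    rw [hv]; exact fderiv_combo hd1 hd2 hdφ
  have h10 : fderiv ℝ u₁ P (1, 0) - fderiv ℝ u₂ P (1, 0) + ε * (κ * Real.exp (κ * P.1)) = 0 := by
    have := (maxOn_directional hΩ hvC2 hPΩ hmaxΩ (1, 0)).1
    rw [hv1] at this
    simp only [ContinuousLinearMap.add_apply, ContinuousLinearMap.sub_apply,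
      ContinuousLinearMap.smul_apply, smul_eq_mul, hφ10] at this
    linarith only [this]
  have h01 : fderiv ℝ u₁ P (0, 1) = fderiv ℝ u₂ P (0, 1) := by
    have := (maxOn_directional hΩ hvC2 hPΩ hmaxΩ (0, 1)).1
    rw [hv1] at this
    simp only [ContinuousLinearMap.add_apply, ContinuousLinearMap.sub_apply,
      ContinuousLinearMap.smul_apply, smul_eq_mul, hφ01] at this
    linarith only [this]
  -- second order quantities
  have hv2 : fderiv ℝ (fderiv ℝ v) P
      = fderiv ℝ (fderiv ℝ u₁) P - fderiv ℝ (fderiv ℝ u₂) P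
        + ε • fderiv ℝ (fderiv ℝ (φf κ)) P := by
    rw [hv]; exact fderiv2_combo hΩ hs₁ hs₂ (φf_contDiff κ) hPΩ
  have hq11 : fderiv ℝ (fderiv ℝ v) P (1, 0) (1, 0)
      = fderiv ℝ (fderiv ℝ u₁) P (1, 0) (1, 0) - fderiv ℝ (fderiv ℝ u₂) P (1, 0) (1, 0)
        + ε * (κ * (κ * Real.exp (κ * P.1))) := by
    rw [hv2]
    simp only [ContinuousLinearMap.add_apply, ContinuousLinearMap.sub_apply,
      ContinuousLinearMap.smul_apply, smul_eq_mul, hφxx]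
  have hq22 : fderiv ℝ (fderiv ℝ v) P (0, 1) (0, 1)
      = fderiv ℝ (fderiv ℝ u₁) P (0, 1) (0, 1) - fderiv ℝ (fderiv ℝ u₂) P (0, 1) (0, 1) := by
    rw [hv2]
    simp only [ContinuousLinearMap.add_apply, ContinuousLinearMap.sub_apply,
      ContinuousLinearMap.smul_apply, smul_eq_mul, hφyy]
    ring
  have hq21 : fderiv ℝ (fderiv ℝ v) P (0, 1) (1, 0)
      = fderiv ℝ (fderiv ℝ u₁) P (0, 1) (1, 0) - fderiv ℝ (fderiv ℝ u₂) P (0, 1) (1, 0) := by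
    rw [hv2]
    simp only [ContinuousLinearMap.add_apply, ContinuousLinearMap.sub_apply,
      ContinuousLinearMap.smul_apply, smul_eq_mul, hφyx]
    ring
  have hQ1 : fderiv ℝ (fderiv ℝ u₁) P (1, 0) (1, 0) - fderiv ℝ (fderiv ℝ u₂) P (1, 0) (1, 0)
      + ε * (κ * (κ * Real.exp (κ * P.1))) ≤ 0 := by
    have := (maxOn_directional hΩ hvC2 hPΩ hmaxΩ (1, 0)).2
    rw [hq11] at this
    exact this
  have hQ2 : fderiv ℝ (fderiv ℝ u₁) P (0, 1) (0, 1)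
      - fderiv ℝ (fderiv ℝ u₂) P (0, 1) (0, 1) ≤ 0 := by
    have := (maxOn_directional hΩ hvC2 hPΩ hmaxΩ (0, 1)).2
    rw [hq22] at this
    exact this
  have hsymmv : fderiv ℝ (fderiv ℝ v) P (1, 0) (0, 1) = fderiv ℝ (fderiv ℝ v) P (0, 1) (1, 0) :=
    fderiv2_symm hΩ hvC2 hPΩ _ _
  have hQ3 : (fderiv ℝ u₁ P (0, 1)) ^ 2
        * (fderiv ℝ (fderiv ℝ u₁) P (1, 0) (1, 0) - fderiv ℝ (fderiv ℝ u₂) P (1, 0) (1, 0)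
          + ε * (κ * (κ * Real.exp (κ * P.1))))
      + 2 * (fderiv ℝ u₁ P (0, 1)) * (-(fderiv ℝ u₁ P (1, 0)))
        * (fderiv ℝ (fderiv ℝ u₁) P (0, 1) (1, 0) - fderiv ℝ (fderiv ℝ u₂) P (0, 1) (1, 0))
      + (-(fderiv ℝ u₁ P (1, 0))) ^ 2
        * (fderiv ℝ (fderiv ℝ u₁) P (0, 1) (0, 1) - fderiv ℝ (fderiv ℝ u₂) P (0, 1) (0, 1))
      ≤ 0 := by
    have hraw := (maxOn_directional hΩ hvC2 hPΩ hmaxΩ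
      (fderiv ℝ u₁ P (0, 1), -(fderiv ℝ u₁ P (1, 0)))).2
    rw [bilin_expand _ _ _ hsymmv, hq11, hq21, hq22] at hraw
    exact hraw
  -- equations in atoms
  have hp1 := he₁ P hPΩ
  have hp2 := he₂ P hPΩ
  unfold MinimalEqDisk at hp1 hp2
  rw [px_eq hd1, py_eq hd1, pxx_eq hΩ hs₁ hPΩ, pyy_eq hΩ hs₁ hPΩ, pxy_eq hΩ hs₁ hPΩ] at hp1
  rw [px_eq hd2, py_eq hd2, pxx_eq hΩ hs₂ hPΩ, pyy_eq hΩ hs₂ hPΩ, pxy_eq hΩ hs₂ hPΩ] at hp2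
  -- bounds at P
  have hnorm10 : ‖((1, 0) : ℝ × ℝ)‖ = 1 := by
    rw [Prod.norm_def]; simp
  have hnorm01 : ‖((0, 1) : ℝ × ℝ)‖ = 1 := by
    rw [Prod.norm_def]; simp
  have hbound1 : ∀ w : ℝ × ℝ, ‖w‖ = 1 → |fderiv ℝ u₂ P w| ≤ G := by
    intro w hw
    have h := (fderiv ℝ u₂ P).le_opNorm w
    rw [hw, mul_one] at h
    have := hG₀ P hPS
    calc |fderiv ℝ u₂ P w| = ‖fderiv ℝ u₂ P w‖ := (Real.norm_eq_abs _).symm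
      _ ≤ ‖fderiv ℝ u₂ P‖ := h
      _ ≤ G₀ := this
      _ ≤ G := by rw [hG]; exact le_max_left _ _
  have hbound2 : ∀ w w' : ℝ × ℝ, ‖w‖ = 1 → ‖w'‖ = 1 →
      |fderiv ℝ (fderiv ℝ u₂) P w w'| ≤ C := by
    intro w w' hw hw'
    have h := (fderiv ℝ (fderiv ℝ u₂) P).le_opNorm₂ w w'
    rw [hw, hw', mul_one, mul_one] at h
    have := hC₀ P hPS
    calc |fderiv ℝ (fderiv ℝ u₂) P w w'| = ‖fderiv ℝ (fderiv ℝ u₂) P w w'‖ :=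
        (Real.norm_eq_abs _).symm
      _ ≤ ‖fderiv ℝ (fderiv ℝ u₂) P‖ := h
      _ ≤ C₀ := this
      _ ≤ C := by rw [hC]; exact le_max_left _ _
  have hxP := (hcoord P hPmem).1
  have hyP := (hcoord P hPmem).2
  have hFFb : |F P| ≤ 1 / 2 := by
    have h1 : P.1 ^ 2 ≤ 1 := by nlinarith only [(abs_le.1 hxP).1, (abs_le.1 hxP).2]
    have h2 : P.2 ^ 2 ≤ 1 := by nlinarith only [(abs_le.1 hyP).1, (abs_le.1 hyP).2]
    have hFval : F P = (1 - P.1 ^ 2 - P.2 ^ 2) / 2 := rfl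
    rw [hFval, abs_le]
    exact ⟨by linarith only [h1, h2], by linarith only [sq_nonneg P.1, sq_nonneg P.2]⟩
  -- δ facts
  have hδpos : 0 < ε * κ * Real.exp (κ * P.1) :=
    mul_pos (mul_pos hεpos hκpos) (Real.exp_pos _)
  have hδ1 : ε * κ * Real.exp (κ * P.1) ≤ 1 := by
    have he1 : Real.exp (κ * P.1) ≤ Real.exp κ := hexp_le P hPmem
    have t1 : ε * κ * Real.exp (κ * P.1) ≤ ε * κ * Real.exp κ :=
      mul_le_mul_of_nonneg_left he1 (mul_nonneg hεpos.le hκpos.le)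
    have hkE : 0 < κ * Real.exp κ := mul_pos hκpos hEκ
    have h1 : ε ≤ 1 / (κ * Real.exp κ) := by rw [hε]; exact min_le_right _ _
    have t2 : ε * (κ * Real.exp κ) ≤ 1 / (κ * Real.exp κ) * (κ * Real.exp κ) :=
      mul_le_mul_of_nonneg_right h1 hkE.le
    have t3 : 1 / (κ * Real.exp κ) * (κ * Real.exp κ) = 1 :=
      one_div_mul_cancel (ne_of_gt hkE)
    linarith only [t1, t2, t3]
  have ha : fderiv ℝ u₁ P (1, 0) = fderiv ℝ u₂ P (1, 0) - ε * κ * Real.exp (κ * P.1) := by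
    linarith only [h10]
  exact endgame G C κ ε (ε * κ * Real.exp (κ * P.1)) (Real.exp (κ * P.1)) (F P) P.1 P.2
    (fderiv ℝ u₁ P (1, 0)) (fderiv ℝ u₁ P (0, 1))
    (fderiv ℝ u₂ P (1, 0)) (fderiv ℝ u₂ P (0, 1))
    (fderiv ℝ (fderiv ℝ u₁) P (1, 0) (1, 0)) (fderiv ℝ (fderiv ℝ u₁) P (0, 1) (0, 1))
    (fderiv ℝ (fderiv ℝ u₁) P (0, 1) (1, 0))
    (fderiv ℝ (fderiv ℝ u₂) P (1, 0) (1, 0)) (fderiv ℝ (fderiv ℝ u₂) P (0, 1) (0, 1))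
    (fderiv ℝ (fderiv ℝ u₂) P (0, 1) (1, 0))
    hGnn hCnn hκdef rfl hδpos hδ1 ha h01
    hp1 hp2 hQ1 hQ2 hQ3 hFFb hxP hyP
    (hbound1 _ hnorm10) (hbound1 _ hnorm01)
    (hbound2 _ _ hnorm10 hnorm10) (hbound2 _ _ hnorm01 hnorm01) (hbound2 _ _ hnorm01 hnorm10)
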